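/- arXiv:2406.00774 — 3 statements merged into one kernel-verified Lean document; each statement's English description precedes it below -/
import Mathlib

section
/- Let p ∈ (1,∞), Λ > 0, M > 0 and μ ∈ (0,1]. There exists a constant C > 0, depending only on p, Λ, M and μ, with the following property: whenever A ∈ ℂ^{d×d}, b, c ∈ ℂ^d and V ≥ 0 real satisfy |⟨Aξ,σ⟩| ≤ Λ|ξ||σ| for all ξ, σ ∈ ℂ^d, |b − c| ≤ M√V, and Γ_p^{(A,b,c,V)}(ξ) ≥ μ(|ξ|² + V) for all ξ ∈ ℂ^d, then |b| ≤ C√V and |c| ≤ C√V. -/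
open scoped ComplexConjugate

/-- The ℝ-linear operator `𝒥_p ξ = (p/2)(ξ + (1 − 2/p)·conj ξ)` on `ℂ^d`. -/
noncomputable def Jmap (p : ℝ) {d : ℕ} (ξ : EuclideanSpace ℂ (Fin d)) :
    EuclideanSpace ℂ (Fin d) :=
  WithLp.toLp 2 (fun i => (p / 2 : ℂ) * (ξ i + ((1 - 2 / p : ℝ) : ℂ) * conj (ξ i)))

/-- The Hermitian inner product `⟨x,y⟩ = ∑ x i * conj (y i)`, linear in the first variable. -/
noncomputable def hip {d : ℕ} (x y : EuclideanSpace ℂ (Fin d)) : ℂ :=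
  @inner ℂ _ _ y x

/-- A matrix acting on `ℂ^d`. -/
noncomputable def mulVecE {d : ℕ} (A : Matrix (Fin d) (Fin d) ℂ)
    (ξ : EuclideanSpace ℂ (Fin d)) : EuclideanSpace ℂ (Fin d) :=
  WithLp.toLp 2 (fun i => A.mulVec (fun j => ξ j) i)

/-- `Γ_p^{(A,b,c,V)}(ξ) = Re⟨Aξ, 𝒥_p ξ⟩ + Re⟨b + 𝒥_p c, ξ⟩ + V`. -/
noncomputable def Gamma (p : ℝ) {d : ℕ} (A : Matrix (Fin d) (Fin d) ℂ)
    (b c : EuclideanSpace ℂ (Fin d)) (V : ℝ) (ξ : EuclideanSpace ℂ (Fin d)) : ℝ :=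
  (hip (mulVecE A ξ) (Jmap p ξ)).re + (hip (b + Jmap p c) ξ).re + V

/-- Componentwise conjugation. -/
noncomputable def conjE {d : ℕ} (ξ : EuclideanSpace ℂ (Fin d)) :
    EuclideanSpace ℂ (Fin d) := WithLp.toLp 2 (fun i => conj (ξ i))

lemma conjE_norm {d : ℕ} (ξ : EuclideanSpace ℂ (Fin d)) : ‖conjE ξ‖ = ‖ξ‖ := by
  simp [conjE, EuclideanSpace.norm_eq]

lemma Jmap_decomp (p : ℝ) (hp : p ≠ 0) {d : ℕ} (ξ : EuclideanSpace ℂ (Fin d)) :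
    Jmap p ξ = ((p/2 : ℝ) : ℂ) • ξ + ((p/2 - 1 : ℝ) : ℂ) • conjE ξ := by
  ext i
  simp only [Jmap, conjE, PiLp.add_apply, PiLp.smul_apply, smul_eq_mul, PiLp.toLp_apply]
  have : (p : ℂ) ≠ 0 := by exact_mod_cast hp
  push_cast
  field_simp

lemma Jmap_norm_le (p : ℝ) (hp : 1 < p) {d : ℕ} (ξ : EuclideanSpace ℂ (Fin d)) :
    ‖Jmap p ξ‖ ≤ p * ‖ξ‖ := by
  rw [Jmap_decomp p (by linarith) ξ]
  calc ‖((p/2 : ℝ) : ℂ) • ξ + ((p/2 - 1 : ℝ) : ℂ) • conjE ξ‖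
      ≤ ‖((p/2 : ℝ) : ℂ) • ξ‖ + ‖((p/2 - 1 : ℝ) : ℂ) • conjE ξ‖ := norm_add_le _ _
    _ = |p/2| * ‖ξ‖ + |p/2 - 1| * ‖conjE ξ‖ := by
        rw [norm_smul, norm_smul, Complex.norm_real, Complex.norm_real,
          Real.norm_eq_abs, Real.norm_eq_abs]
    _ ≤ p * ‖ξ‖ := by
        rw [conjE_norm]
        have h1 : |p/2| = p/2 := abs_of_pos (by linarith)
        have h2 : |p/2 - 1| ≤ p/2 := abs_le.mpr ⟨by linarith, by linarith⟩
        nlinarith [norm_nonneg ξ]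

lemma hip_smul (r : ℝ) {d : ℕ} (w : EuclideanSpace ℂ (Fin d)) :
    hip w (((r : ℝ) : ℂ) • w) = (r : ℂ) * (‖w‖ : ℂ)^2 := by
  rw [hip, inner_smul_left, inner_self_eq_norm_sq_to_K]
  simp

lemma norm_csmul (r : ℝ) {d : ℕ} (w : EuclideanSpace ℂ (Fin d)) :
    ‖((r : ℝ) : ℂ) • w‖ = |r| * ‖w‖ := by
  rw [norm_smul, Complex.norm_real, Real.norm_eq_abs]

theorem stmt4 (p Λ M μ : ℝ) (hp : 1 < p)
    (hΛ : 0 < Λ) (hM : 0 < M) (hμ0 : 0 < μ) (hμ1 : μ ≤ 1) :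
    ∃ C : ℝ, 0 < C ∧
      ∀ (d : ℕ), 1 ≤ d →
        ∀ (A : Matrix (Fin d) (Fin d) ℂ) (b c : EuclideanSpace ℂ (Fin d)) (V : ℝ),
          0 ≤ V →
          (∀ ξ σ : EuclideanSpace ℂ (Fin d),
            ‖hip (mulVecE A ξ) σ‖ ≤ Λ * ‖ξ‖ * ‖σ‖) →
          ‖b - c‖ ≤ M * Real.sqrt V →
          (∀ ξ : EuclideanSpace ℂ (Fin d), μ * (‖ξ‖ ^ 2 + V) ≤ Gamma p A b c V ξ) →
          ‖b‖ ≤ C * Real.sqrt V ∧ ‖c‖ ≤ C * Real.sqrt V := by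
  refine ⟨Λ * p + 1 + 2 * M, by positivity, ?_⟩
  intro d hd A b c V hV hA hbc hΓ
  set s := Real.sqrt V with hs_def
  have hs : 0 ≤ s := Real.sqrt_nonneg V
  set w := b + Jmap p c with hw_def
  -- Step 1: key inequality
  have key : ∀ ξ : EuclideanSpace ℂ (Fin d), -(hip w ξ).re ≤ Λ * p * ‖ξ‖^2 + V := by
    intro ξ
    have h1 := hΓ ξ
    have h2 : (0:ℝ) ≤ Gamma p A b c V ξ := by
      refine le_trans ?_ h1
      positivity
    have h3 : (hip (mulVecE A ξ) (Jmap p ξ)).re ≤ Λ * p * ‖ξ‖^2 := by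
      calc (hip (mulVecE A ξ) (Jmap p ξ)).re
          ≤ ‖hip (mulVecE A ξ) (Jmap p ξ)‖ := Complex.re_le_norm _
        _ ≤ Λ * ‖ξ‖ * ‖Jmap p ξ‖ := hA ξ (Jmap p ξ)
        _ ≤ Λ * ‖ξ‖ * (p * ‖ξ‖) := by
            exact mul_le_mul_of_nonneg_left (Jmap_norm_le p hp ξ) (by positivity)
        _ = Λ * p * ‖ξ‖^2 := by ring
    unfold Gamma at h2
    linarith
  -- Step 2: bound on ‖w‖
  have hw : ‖w‖ ≤ (Λ * p + 1) * s := by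
    by_cases hw0 : w = 0
    · rw [hw0, norm_zero]; positivity
    have hwpos : 0 < ‖w‖ := norm_pos_iff.mpr hw0
    have hstep : ∀ t : ℝ, 0 ≤ t → t * ‖w‖ ≤ Λ * p * t^2 + V := by
      intro t ht
      have hk := key ((((-(t / ‖w‖)) : ℝ) : ℂ) • w)
      have e1 : (hip w ((((-(t / ‖w‖)) : ℝ) : ℂ) • w)).re = -(t / ‖w‖) * ‖w‖^2 := by
        rw [hip_smul, ← Complex.ofReal_pow, ← Complex.ofReal_mul, Complex.ofReal_re]
      have e2 : ‖(((-(t / ‖w‖)) : ℝ) : ℂ) • w‖ = t := by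
        rw [norm_csmul, abs_neg, abs_div, abs_of_nonneg ht, abs_of_pos hwpos]
        field_simp
      rw [e1, e2] at hk
      have e3 : -(-(t / ‖w‖) * ‖w‖ ^ 2) = t * ‖w‖ := by
        field_simp
      rw [e3] at hk
      exact hk
    by_cases hV0 : V = 0
    · have h0 : ‖w‖ ≤ 0 := by
        refine le_of_forall_pos_le_add ?_
        intro ε hε
        have hΛp : 0 < Λ * p := by positivity
        have hpos : 0 < ε / (Λ * p) := by positivity
        have hq := hstep (ε / (Λ * p)) hpos.le
        rw [hV0] at hq
        have heq : Λ * p * (ε / (Λ * p))^2 = ε / (Λ * p) * ε := by field_simp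
        have h4 : ε / (Λ * p) * ‖w‖ ≤ ε / (Λ * p) * ε := by linarith
        have h5 : ‖w‖ ≤ ε := (mul_le_mul_iff_right₀ hpos).mp h4
        linarith
      linarith [hwpos]
    · have hVpos : 0 < V := lt_of_le_of_ne hV (Ne.symm hV0)
      have hspos : 0 < s := Real.sqrt_pos.mpr hVpos
      have hsq : s^2 = V := Real.sq_sqrt hV
      have := hstep s hs
      nlinarith
  -- Step 3: ‖c‖ ≤ ‖c + Jmap p c‖
  have hcJ : ‖c‖ ≤ ‖c + Jmap p c‖ := by
    have hdc := Jmap_decomp p (by linarith) c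
    have e : ((1 + p/2 : ℝ) : ℂ) • c = (c + Jmap p c) - ((p/2 - 1 : ℝ) : ℂ) • conjE c := by
      rw [hdc]
      push_cast
      module
    have hn : (1 + p/2) * ‖c‖ ≤ ‖c + Jmap p c‖ + |p/2 - 1| * ‖c‖ := by
      have h1 : ‖((1 + p/2 : ℝ) : ℂ) • c‖ = (1 + p/2) * ‖c‖ := by
        rw [norm_smul, Complex.norm_real, Real.norm_eq_abs, abs_of_pos (by linarith)]
      have h2 : ‖((p/2 - 1 : ℝ) : ℂ) • conjE c‖ = |p/2 - 1| * ‖c‖ := by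
        rw [norm_smul, Complex.norm_real, Real.norm_eq_abs, conjE_norm]
      calc (1 + p/2) * ‖c‖ = ‖((1 + p/2 : ℝ) : ℂ) • c‖ := h1.symm
        _ = ‖(c + Jmap p c) - ((p/2 - 1 : ℝ) : ℂ) • conjE c‖ := by rw [e]
        _ ≤ ‖c + Jmap p c‖ + ‖((p/2 - 1 : ℝ) : ℂ) • conjE c‖ := norm_sub_le _ _
        _ = ‖c + Jmap p c‖ + |p/2 - 1| * ‖c‖ := by rw [h2]
    have h3 : |p/2 - 1| ≤ p/2 := abs_le.mpr ⟨by linarith, by linarith⟩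
    nlinarith [norm_nonneg c]
  -- Step 4: conclude
  have hcw : c + Jmap p c = w - (b - c) := by rw [hw_def]; abel
  have h4 : ‖c + Jmap p c‖ ≤ ‖w‖ + M * s := by
    rw [hcw]
    calc ‖w - (b - c)‖ ≤ ‖w‖ + ‖b - c‖ := norm_sub_le _ _
      _ ≤ ‖w‖ + M * s := by linarith
  have hc : ‖c‖ ≤ (Λ * p + 1 + M) * s := by
    have := hcJ.trans h4
    nlinarith
  constructor
  · have : ‖b‖ ≤ ‖b - c‖ + ‖c‖ := by
      calc ‖b‖ = ‖(b - c) + c‖ := by rw [sub_add_cancel]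
        _ ≤ ‖b - c‖ + ‖c‖ := norm_add_le _ _
    nlinarith
  · nlinarith [mul_nonneg hM.le hs]
end

section
/- Let p ∈ (1,∞), Λ > 0, M > 0 and μ ∈ (0,1]. There exist ε > 0 and μ' > 0, depending only on p, Λ, M and μ, with the following property: whenever A ∈ ℂ^{d×d}, b, c ∈ ℂ^d and V ≥ 0 real satisfy |⟨Aξ,σ⟩| ≤ Λ|ξ||σ| for all ξ, σ ∈ ℂ^d, |b − c| ≤ M√V, and Γ_p^{(A,b,c,V)}(ξ) ≥ μ(|ξ|² + V) for all ξ ∈ ℂ^d, then for every s ∈ [p−ε, p+ε] with s > 1 one has Γ_s^{(A,b,c,V)}(ξ) ≥ μ'(|ξ|² + V) for all ξ ∈ ℂ^d. -/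
open scoped ComplexConjugate

/- ### Auxiliary lemmas -/

lemma aux_le_of_sq_le_sq {x y : ℝ} (hx : 0 ≤ x) (hy : 0 ≤ y) (h : x ^ 2 ≤ y ^ 2) : x ≤ y := by
  nlinarith

lemma aux_norm_le_comp_sq {d : ℕ} (x y : EuclideanSpace ℂ (Fin d)) (a : ℝ) (ha : 0 ≤ a)
    (h : ∀ i, ‖x i‖ ^ 2 ≤ a ^ 2 * ‖y i‖ ^ 2) : ‖x‖ ≤ a * ‖y‖ := by
  rw [EuclideanSpace.norm_eq, EuclideanSpace.norm_eq,
    ← Real.sqrt_sq ha, ← Real.sqrt_mul (sq_nonneg a)]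
  apply Real.sqrt_le_sqrt
  rw [Finset.mul_sum]
  exact Finset.sum_le_sum fun i _ => h i

lemma aux_Jz (p : ℝ) (hp : p ≠ 0) (z : ℂ) :
    (p / 2 : ℂ) * (z + ((1 - 2 / p : ℝ) : ℂ) * conj z)
      = (((p - 1) * z.re : ℝ) : ℂ) + ((z.im : ℝ) : ℂ) * Complex.I := by
  apply Complex.ext <;>
    simp [Complex.add_re, Complex.mul_re, Complex.mul_im, Complex.div_re, Complex.div_im] <;>
    field_simp <;> ring

lemma aux_Jmap_apply (p : ℝ) (hp : p ≠ 0) {d : ℕ} (ξ : EuclideanSpace ℂ (Fin d)) (i : Fin d) :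
    Jmap p ξ i = (((p - 1) * (ξ i).re : ℝ) : ℂ) + (((ξ i).im : ℝ) : ℂ) * Complex.I :=
  aux_Jz p hp (ξ i)

lemma aux_sq_norm_z (z : ℂ) : ‖z‖ ^ 2 = z.re ^ 2 + z.im ^ 2 := by
  rw [Complex.sq_norm, Complex.normSq_apply]; ring

lemma aux_Jmap_norm_le (p : ℝ) (hp : 1 ≤ p) {d : ℕ} (ξ : EuclideanSpace ℂ (Fin d)) :
    ‖Jmap p ξ‖ ≤ max (p - 1) 1 * ‖ξ‖ := by
  have hp0 : p ≠ 0 := by linarith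
  apply aux_norm_le_comp_sq _ _ _ (le_trans zero_le_one (le_max_right _ _))
  intro i
  rw [aux_Jmap_apply p hp0, aux_sq_norm_z, aux_sq_norm_z]
  have h1 : p - 1 ≤ max (p - 1) 1 := le_max_left _ _
  have h2 : (1 : ℝ) ≤ max (p - 1) 1 := le_max_right _ _
  have h0 : (0:ℝ) ≤ p - 1 := by linarith
  have ha : (p - 1) ^ 2 ≤ (max (p - 1) 1) ^ 2 := by nlinarith
  have hb : (1:ℝ) ≤ (max (p - 1) 1) ^ 2 := by nlinarith
  simp only [Complex.add_re, Complex.add_im, Complex.ofReal_re, Complex.ofReal_im,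
    Complex.mul_re, Complex.mul_im, Complex.I_re, Complex.I_im]
  have e1 := mul_le_mul_of_nonneg_right ha (sq_nonneg ((ξ i).re))
  have e2 := mul_le_mul_of_nonneg_right hb (sq_nonneg ((ξ i).im))
  nlinarith [e1, e2]

lemma aux_Jmap_diff (s q : ℝ) (hs : s ≠ 0) (hq : q ≠ 0) {d : ℕ} (ξ : EuclideanSpace ℂ (Fin d))
    (i : Fin d) :
    (Jmap s ξ - Jmap q ξ) i = (((s - q) * (ξ i).re : ℝ) : ℂ) := by
  have h : (Jmap s ξ - Jmap q ξ) i = Jmap s ξ i - Jmap q ξ i := rfl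
  rw [h, aux_Jmap_apply s hs, aux_Jmap_apply q hq]
  push_cast
  ring

lemma aux_Jmap_diff_norm_le (s q e : ℝ) (hs : s ≠ 0) (hq : q ≠ 0) (he : 0 ≤ e)
    (hsq : (s - q) ^ 2 ≤ e ^ 2) {d : ℕ} (ξ : EuclideanSpace ℂ (Fin d)) :
    ‖Jmap s ξ - Jmap q ξ‖ ≤ e * ‖ξ‖ := by
  apply aux_norm_le_comp_sq _ _ _ he
  intro i
  rw [aux_Jmap_diff s q hs hq, Complex.norm_real, Real.norm_eq_abs, aux_sq_norm_z (ξ i), sq_abs]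
  nlinarith [sq_nonneg ((ξ i).re), sq_nonneg ((ξ i).im), sq_nonneg ((s-q)*(ξ i).im),
    mul_nonneg (mul_nonneg he he) (sq_nonneg ((ξ i).im))]

lemma aux_norm_le_add_Jmap (p : ℝ) (hp : 1 ≤ p) {d : ℕ} (c : EuclideanSpace ℂ (Fin d)) :
    ‖c‖ ≤ ‖c + Jmap p c‖ := by
  have h := aux_norm_le_comp_sq c (c + Jmap p c) 1 zero_le_one ?_
  · simpa using h
  intro i
  have hp0 : p ≠ 0 := by linarith
  have hap : (c + Jmap p c) i = c i + Jmap p c i := rfl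
  rw [hap, aux_Jmap_apply p hp0, aux_sq_norm_z, aux_sq_norm_z]
  simp only [Complex.add_re, Complex.add_im, Complex.ofReal_re, Complex.ofReal_im,
    Complex.mul_re, Complex.mul_im, Complex.I_re, Complex.I_im]
  ring_nf
  nlinarith [sq_nonneg ((c i).re), sq_nonneg ((c i).im), sq_nonneg ((p-1)*(c i).re)]

lemma aux_re_ge_neg_norm {d : ℕ} (x y : EuclideanSpace ℂ (Fin d)) :
    -(‖x‖ * ‖y‖) ≤ (hip x y).re := by
  have h1 : ‖(hip x y : ℂ)‖ ≤ ‖y‖ * ‖x‖ := norm_inner_le_norm y x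
  have h2 := abs_le.mp (Complex.abs_re_le_norm (hip x y))
  nlinarith [h2.1, norm_nonneg x, norm_nonneg y]

set_option maxHeartbeats 1000000 in
theorem stmt5 (p Λ M μ : ℝ) (hp : 1 < p)
    (hΛ : 0 < Λ) (hM : 0 < M) (hμ0 : 0 < μ) (hμ1 : μ ≤ 1) :
    ∃ ε μ' : ℝ, 0 < ε ∧ 0 < μ' ∧
      ∀ (d : ℕ), 1 ≤ d →
        ∀ (A : Matrix (Fin d) (Fin d) ℂ) (b c : EuclideanSpace ℂ (Fin d)) (V : ℝ),
          0 ≤ V →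
          (∀ ξ σ : EuclideanSpace ℂ (Fin d),
            ‖hip (mulVecE A ξ) σ‖ ≤ Λ * ‖ξ‖ * ‖σ‖) →
          ‖b - c‖ ≤ M * Real.sqrt V →
          (∀ ξ : EuclideanSpace ℂ (Fin d), μ * (‖ξ‖ ^ 2 + V) ≤ Gamma p A b c V ξ) →
          ∀ s : ℝ, p - ε ≤ s → s ≤ p + ε → 1 < s →
            ∀ ξ : EuclideanSpace ℂ (Fin d), μ' * (‖ξ‖ ^ 2 + V) ≤ Gamma s A b c V ξ := by
  have hp0 : p ≠ 0 := by linarith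
  set K : ℝ := max (p - 1) 1 with hK
  have hK1 : (1:ℝ) ≤ K := le_max_right _ _
  clear_value K
  set C : ℝ := Λ * K + 1 with hCdef
  clear_value C
  have hC0 : 0 < C := by nlinarith
  set C₁ : ℝ := 2 * Real.sqrt C + M with hC₁def
  have hsC : 0 ≤ Real.sqrt C := Real.sqrt_nonneg _
  clear_value C₁
  have hC₁0 : 0 < C₁ := by rw [hC₁def]; positivity
  set D : ℝ := Λ + C₁ + 1 with hDdef
  clear_value D
  have hD0 : 0 < D := by rw [hDdef]; positivity
  refine ⟨μ / (2 * D), μ / 2, by positivity, by positivity, ?_⟩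
  set ε : ℝ := μ / (2 * D) with hεdef
  clear_value ε
  have hε0 : 0 < ε := by rw [hεdef]; positivity
  have hεD : ε * D = μ / 2 := by
    rw [hεdef]; field_simp
  intro d hd A b c V hV hA hbc hΓ s hs1 hs2 hs3 ξ
  have hs0 : s ≠ 0 := by linarith
  -- Step 1: bound on w := b + Jmap p c
  set w : EuclideanSpace ℂ (Fin d) := b + Jmap p c with hw
  set W : ℝ := ‖w‖ ^ 2 with hW
  have hWnn : 0 ≤ W := sq_nonneg _
  clear_value W
  set t : ℝ := 1 / (2 * C) with ht
  clear_value t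
  have ht0 : 0 < t := by rw [ht]; positivity
  set ξ₀ : EuclideanSpace ℂ (Fin d) := (-(t:ℂ)) • w with hξ₀
  have hξ₀n : ‖ξ₀‖ = t * ‖w‖ := by
    rw [hξ₀, norm_smul, norm_neg, Complex.norm_real, Real.norm_eq_abs, abs_of_pos ht0]
  have hlin : (hip w ξ₀).re = -(t * W) := by
    show (@inner ℂ _ _ ξ₀ w).re = _
    rw [hξ₀, inner_smul_left]
    have hz : (@inner ℂ _ _ w w) = ((‖w‖ ^ 2 : ℝ) : ℂ) := by
      rw [inner_self_eq_norm_sq_to_K]; norm_num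
    rw [hz, map_neg, Complex.conj_ofReal]
    have h5 : (-(t:ℂ)) * ((‖w‖ ^ 2 : ℝ) : ℂ) = ((-(t * ‖w‖ ^ 2) : ℝ) : ℂ) := by
      push_cast; ring
    rw [h5, Complex.ofReal_re, hW]
  have hquad : (hip (mulVecE A ξ₀) (Jmap p ξ₀)).re ≤ Λ * K * (t ^ 2 * W) := by
    have h1 := hA ξ₀ (Jmap p ξ₀)
    have h2 := abs_le.mp (Complex.abs_re_le_norm (hip (mulVecE A ξ₀) (Jmap p ξ₀)))
    have h3 := aux_Jmap_norm_le p hp.le ξ₀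
    rw [← hK] at h3
    have h4 : Λ * ‖ξ₀‖ * ‖Jmap p ξ₀‖ ≤ Λ * ‖ξ₀‖ * (K * ‖ξ₀‖) := by
      apply mul_le_mul_of_nonneg_left h3 (by positivity)
    have h5 : Λ * ‖ξ₀‖ * (K * ‖ξ₀‖) = Λ * K * (t ^ 2 * W) := by
      rw [hξ₀n, hW]; ring
    linarith [h2.2, h1]
  have hmain := hΓ ξ₀
  rw [Gamma] at hmain
  rw [← hw] at hmain
  have hξ₀sq : ‖ξ₀‖ ^ 2 = t ^ 2 * W := by rw [hξ₀n, hW]; ring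
  rw [hξ₀sq, hlin] at hmain
  -- μ (t²W + V) ≤ ΛK t² W - t W + V
  have step : t * W ≤ C * (t ^ 2 * W) + V := by
    have h6 : (Λ * K - μ) * (t ^ 2 * W) ≤ C * (t ^ 2 * W) := by
      apply mul_le_mul_of_nonneg_right _ (mul_nonneg (sq_nonneg t) hWnn)
      rw [hCdef]; linarith
    have h7 : μ * (t ^ 2 * W + V) = μ * (t ^ 2 * W) + μ * V := by ring
    have h8 : (Λ * K - μ) * (t ^ 2 * W) = Λ * K * (t ^ 2 * W) - μ * (t ^ 2 * W) := by ring
    have h9 : 0 ≤ μ * V := mul_nonneg hμ0.le hV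
    linarith [hmain, hquad]
  have hWle : W ≤ 4 * C * V := by
    have hCt : t * (2 * C) = 1 := by rw [ht]; field_simp
    have e1 : (4*C^2) * (t*W) ≤ (4*C^2) * (C*(t^2*W)+V) :=
      mul_le_mul_of_nonneg_left step (by positivity)
    have e2 : (4*C^2) * (t*W) = 2*C*(t*(2*C))*W := by ring
    have e3 : (4*C^2) * (C*(t^2*W)+V) = C*(t*(2*C))^2*W + 4*C^2*V := by ring
    rw [e2, e3, hCt] at e1
    nlinarith [e1, hC0]
  have hwn : ‖w‖ ≤ 2 * Real.sqrt C * Real.sqrt V := by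
    apply aux_le_of_sq_le_sq (norm_nonneg _) (by positivity)
    have : (2 * Real.sqrt C * Real.sqrt V) ^ 2 = 4 * ((Real.sqrt C)^2 * (Real.sqrt V)^2) := by
      ring
    rw [this, Real.sq_sqrt hC0.le, Real.sq_sqrt hV]
    have : ‖w‖ ^ 2 = W := hW.symm
    rw [this]; linarith
  -- Step 2: bound on ‖c‖
  have hcn : ‖c‖ ≤ C₁ * Real.sqrt V := by
    have h1 : ‖c‖ ≤ ‖c + Jmap p c‖ := aux_norm_le_add_Jmap p hp.le c
    have h2 : c + Jmap p c = w - (b - c) := by rw [hw]; abel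
    have h3 : ‖w - (b - c)‖ ≤ ‖w‖ + ‖b - c‖ := norm_sub_le _ _
    rw [h2] at h1
    calc ‖c‖ ≤ ‖w‖ + ‖b - c‖ := le_trans h1 h3
      _ ≤ 2 * Real.sqrt C * Real.sqrt V + M * Real.sqrt V := by linarith
      _ = C₁ * Real.sqrt V := by rw [hC₁def]; ring
  -- Step 3: perturbation
  have hεsp : (s - p) ^ 2 ≤ ε ^ 2 := by nlinarith
  have hDξ : ‖Jmap s ξ - Jmap p ξ‖ ≤ ε * ‖ξ‖ :=
    aux_Jmap_diff_norm_le s p ε hs0 hp0 hε0.le hεsp ξ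
  have hDc : ‖Jmap s c - Jmap p c‖ ≤ ε * ‖c‖ :=
    aux_Jmap_diff_norm_le s p ε hs0 hp0 hε0.le hεsp c
  -- decomposition of Gamma s
  have hdec : Gamma s A b c V ξ = Gamma p A b c V ξ
      + (hip (mulVecE A ξ) (Jmap s ξ - Jmap p ξ)).re
      + (hip (Jmap s c - Jmap p c) ξ).re := by
    have e1 : (hip (mulVecE A ξ) (Jmap s ξ)).re
        = (hip (mulVecE A ξ) (Jmap p ξ)).re
          + (hip (mulVecE A ξ) (Jmap s ξ - Jmap p ξ)).re := by
      show (@inner ℂ _ _ (Jmap s ξ) (mulVecE A ξ)).re = _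
      have h1 : Jmap s ξ = Jmap p ξ + (Jmap s ξ - Jmap p ξ) := by abel
      conv_lhs => rw [h1]
      rw [inner_add_left]
      simp only [hip, Complex.add_re]
    have e2 : (hip (b + Jmap s c) ξ).re
        = (hip (b + Jmap p c) ξ).re + (hip (Jmap s c - Jmap p c) ξ).re := by
      show (@inner ℂ _ _ ξ (b + Jmap s c)).re = _
      have h2 : b + Jmap s c = (b + Jmap p c) + (Jmap s c - Jmap p c) := by abel
      conv_lhs => rw [h2]
      rw [inner_add_right]
      simp only [hip, Complex.add_re]
    rw [Gamma, Gamma, e1, e2]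
    ring
  -- bounds on perturbation terms
  have hR1 : -(Λ * ε * ‖ξ‖ ^ 2) ≤ (hip (mulVecE A ξ) (Jmap s ξ - Jmap p ξ)).re := by
    have h1 := hA ξ (Jmap s ξ - Jmap p ξ)
    have h2 := abs_le.mp (Complex.abs_re_le_norm (hip (mulVecE A ξ) (Jmap s ξ - Jmap p ξ)))
    have h3 : Λ * ‖ξ‖ * ‖Jmap s ξ - Jmap p ξ‖ ≤ Λ * ‖ξ‖ * (ε * ‖ξ‖) :=
      mul_le_mul_of_nonneg_left hDξ (by positivity)
    have h4 : Λ * ‖ξ‖ * (ε * ‖ξ‖) = Λ * ε * ‖ξ‖ ^ 2 := by ring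
    linarith [h2.1]
  have hR2 : -(ε * C₁ * Real.sqrt V * ‖ξ‖) ≤ (hip (Jmap s c - Jmap p c) ξ).re := by
    have h1 := aux_re_ge_neg_norm (Jmap s c - Jmap p c) ξ
    have h2 : ‖Jmap s c - Jmap p c‖ * ‖ξ‖ ≤ (ε * (C₁ * Real.sqrt V)) * ‖ξ‖ := by
      apply mul_le_mul_of_nonneg_right _ (norm_nonneg _)
      calc ‖Jmap s c - Jmap p c‖ ≤ ε * ‖c‖ := hDc
        _ ≤ ε * (C₁ * Real.sqrt V) := mul_le_mul_of_nonneg_left hcn hε0.le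
    have h3 : (ε * (C₁ * Real.sqrt V)) * ‖ξ‖ = ε * C₁ * Real.sqrt V * ‖ξ‖ := by ring
    linarith
  -- AM-GM and conclusion
  have amgm : Real.sqrt V * ‖ξ‖ ≤ (V + ‖ξ‖ ^ 2) / 2 := by
    nlinarith [sq_nonneg (Real.sqrt V - ‖ξ‖), Real.sq_sqrt hV]
  have hSnn : 0 ≤ ‖ξ‖ ^ 2 + V := by positivity
  have hGp := hΓ ξ
  have key1 : Λ * ε * ‖ξ‖ ^ 2 ≤ ε * Λ * (‖ξ‖ ^ 2 + V) := by
    have h0 : 0 ≤ Λ * ε * V := mul_nonneg (mul_nonneg hΛ.le hε0.le) hV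
    linarith [h0]
  have key2 : ε * C₁ * Real.sqrt V * ‖ξ‖ ≤ ε * C₁ * (‖ξ‖ ^ 2 + V) := by
    have h1 := mul_le_mul_of_nonneg_left amgm
      (mul_nonneg hε0.le hC₁0.le : (0:ℝ) ≤ ε * C₁)
    have h2 : 0 ≤ ε * C₁ * (‖ξ‖ ^ 2 + V) := mul_nonneg (mul_nonneg hε0.le hC₁0.le) hSnn
    linarith [h1, h2]
  have key3 : ε * Λ * (‖ξ‖ ^ 2 + V) + ε * C₁ * (‖ξ‖ ^ 2 + V) ≤ (μ / 2) * (‖ξ‖ ^ 2 + V) := by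
    have h1 : ε * Λ + ε * C₁ ≤ ε * D := by
      have hr : ε * D = ε * Λ + ε * C₁ + ε := by rw [hDdef]; ring
      linarith [hε0.le]
    have h4 := mul_le_mul_of_nonneg_right h1 hSnn
    have h5 : ε * D * (‖ξ‖ ^ 2 + V) = (μ / 2) * (‖ξ‖ ^ 2 + V) := by rw [hεD]
    linarith [h4, h5]
  rw [hdec]
  linarith
end

section
/- Let p ∈ (1,∞), q = p/(p−1), p* = max{p,q}. Let A ∈ ℂ^{d×d}, b, c ∈ ℂ^d, V ≥ 0 real and μ > 0. If Γ_p^{(A,b,c,V)}(ξ) ≥ μ(|ξ|² + V) for all ξ ∈ ℂ^d, then Γ_q^{(A*, c, b, V)}(ξ) ≥ μ·min{1, (p*−1)^{−2}}·(|ξ|² + V) for all ξ ∈ ℂ^d, where A* denotes the conjugate transpose of A. -/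
open scoped ComplexConjugate

lemma adj_re {d : ℕ} (A : Matrix (Fin d) (Fin d) ℂ) (x y : EuclideanSpace ℂ (Fin d)) :
    (hip (mulVecE A.conjTranspose x) y).re = (hip (mulVecE A y) x).re := by
  have h : hip (mulVecE A.conjTranspose x) y = conj (hip (mulVecE A y) x) := by
    simp only [hip, mulVecE, PiLp.inner_apply, RCLike.inner_apply, Matrix.mulVec,
      dotProduct, Matrix.conjTranspose_apply, map_sum, map_mul, Finset.mul_sum, Finset.sum_mul,
      Complex.conj_conj]
    rw [Finset.sum_comm]
    apply Finset.sum_congr rfl; intro i _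
    apply Finset.sum_congr rfl; intro j _
    simp only [starRingEnd_apply]; ring
  rw [h, Complex.conj_re]

lemma jsym {d : ℕ} (r : ℝ) (x y : EuclideanSpace ℂ (Fin d)) :
    (hip (Jmap r y) x).re = (hip y (Jmap r x)).re := by
  simp only [hip, PiLp.inner_apply, RCLike.inner_apply, Jmap, Complex.re_sum]
  apply Finset.sum_congr rfl; intro i _
  simp only [map_mul, map_add, Complex.conj_conj, map_div₀, Complex.conj_ofReal, map_ofNat]
  simp [Complex.mul_re, Complex.add_re, Complex.add_im, Complex.mul_im, Complex.conj_re,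
    Complex.conj_im, Complex.ofReal_re, Complex.ofReal_im, Complex.div_re, Complex.div_im,
    Complex.normSq_apply]
  ring

lemma jmap_pq {d : ℕ} (p q : ℝ) (hp : 1 < p) (hq : q = p / (p - 1))
    (ξ : EuclideanSpace ℂ (Fin d)) : Jmap p (Jmap q ξ) = ξ := by
  have hp1 : p - 1 ≠ 0 := by linarith
  have hp0 : p ≠ 0 := by linarith
  have hcqR : (1 - 2/q) = -(1 - 2/p) := by subst hq; field_simp; ring
  have hcq : ((1-2/q:ℝ):ℂ) = -((1-2/p:ℝ):ℂ) := by rw [hcqR]; push_cast; ring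
  have hkeyR : (p/2) * (q/2) * (1 - (1-2/p)^2) = 1 := by subst hq; field_simp; ring
  have hkey : ((p:ℂ)/2) * ((q:ℂ)/2) * (1 - ((1-2/p:ℝ):ℂ)^2) = 1 := by
    exact_mod_cast congrArg (Complex.ofReal) hkeyR
  ext i
  show ((p:ℂ)/2) * ( (((q:ℂ)/2)*(ξ i + ((1-2/q:ℝ):ℂ)*conj (ξ i)))
      + ((1-2/p:ℝ):ℂ) * conj (((q:ℂ)/2)*(ξ i + ((1-2/q:ℝ):ℂ)*conj (ξ i))) ) = ξ i
  rw [hcq]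
  simp only [map_mul, map_add, map_neg, Complex.conj_conj, map_div₀, Complex.conj_ofReal, map_ofNat]
  push_cast at hkey ⊢
  linear_combination (ξ i) * hkey

lemma jmap_qp {d : ℕ} (p q : ℝ) (hp : 1 < p) (hq : q = p / (p - 1))
    (ξ : EuclideanSpace ℂ (Fin d)) : Jmap q (Jmap p ξ) = ξ := by
  have hp1 : p - 1 ≠ 0 := by linarith
  have hp0 : p ≠ 0 := by linarith
  have hcqR : (1 - 2/q) = -(1 - 2/p) := by subst hq; field_simp; ring
  have hcq : ((1-2/q:ℝ):ℂ) = -((1-2/p:ℝ):ℂ) := by rw [hcqR]; push_cast; ring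
  have hkeyR : (p/2) * (q/2) * (1 - (1-2/p)^2) = 1 := by subst hq; field_simp; ring
  have hkey : ((p:ℂ)/2) * ((q:ℂ)/2) * (1 - ((1-2/p:ℝ):ℂ)^2) = 1 := by
    exact_mod_cast congrArg (Complex.ofReal) hkeyR
  ext i
  show ((q:ℂ)/2) * ( (((p:ℂ)/2)*(ξ i + ((1-2/p:ℝ):ℂ)*conj (ξ i)))
      + ((1-2/q:ℝ):ℂ) * conj (((p:ℂ)/2)*(ξ i + ((1-2/p:ℝ):ℂ)*conj (ξ i))) ) = ξ i
  rw [hcq]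
  simp only [map_mul, map_add, map_neg, Complex.conj_conj, map_div₀, Complex.conj_ofReal, map_ofNat]
  push_cast at hkey ⊢
  linear_combination (ξ i) * hkey

theorem stmt8 (d : ℕ) (hd : 1 ≤ d) (p q pstar : ℝ) (hp : 1 < p)
    (hq : q = p / (p - 1)) (hpstar : pstar = max p q)
    (A : Matrix (Fin d) (Fin d) ℂ) (b c : EuclideanSpace ℂ (Fin d))
    (V μ : ℝ) (hV : 0 ≤ V) (hμ : 0 < μ)
    (hΓ : ∀ ξ : EuclideanSpace ℂ (Fin d), μ * (‖ξ‖ ^ 2 + V) ≤ Gamma p A b c V ξ) :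
    ∀ ξ : EuclideanSpace ℂ (Fin d),
      μ * min 1 ((pstar - 1)⁻¹ ^ 2) * (‖ξ‖ ^ 2 + V) ≤ Gamma q A.conjTranspose c b V ξ := by
  intro ξ
  have hp1 : (0:ℝ) < p - 1 := by linarith
  have hq0 : q ≠ 0 := by
    rw [hq]; positivity
  have hJpq : Jmap p (Jmap q ξ) = ξ := jmap_pq p q hp hq ξ
  -- Gamma identity
  have hGam : Gamma q A.conjTranspose c b V ξ = Gamma p A b c V (Jmap q ξ) := by
    unfold Gamma
    have h1 : (hip (mulVecE A.conjTranspose ξ) (Jmap q ξ)).re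
        = (hip (mulVecE A (Jmap q ξ)) (Jmap p (Jmap q ξ))).re := by
      rw [hJpq, adj_re]
    have hadd : ∀ (u v w : EuclideanSpace ℂ (Fin d)), hip (u + v) w = hip u w + hip v w := by
      intro u v w; simp [hip, inner_add_right]
    rw [h1, hadd, hadd, Complex.add_re, Complex.add_re, jsym q ξ b, jsym p (Jmap q ξ) c, hJpq]
    ring
  -- constant facts
  set m : ℝ := min 1 ((pstar - 1)⁻¹ ^ 2) with hm
  have hm0 : 0 ≤ m := le_min zero_le_one (by positivity)
  have hm1 : m ≤ 1 := min_le_left _ _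
  have hm2 : m ≤ ((p - 1)⁻¹) ^ 2 := by
    rcases le_or_gt p 2 with hcase | hcase
    · have h1 : (1:ℝ) ≤ (p - 1)⁻¹ := by
        rw [le_inv_comm₀ zero_lt_one hp1]; simpa using by linarith
      calc m ≤ 1 := hm1
        _ ≤ ((p - 1)⁻¹) ^ 2 := by nlinarith
    · have hqp : q ≤ p := by
        rw [hq, div_le_iff₀ hp1]; nlinarith
      have : pstar = p := by rw [hpstar, max_eq_left hqp]
      rw [hm, this]
      exact min_le_right _ _
  -- norm bound
  have hnorm : m * ‖ξ‖ ^ 2 ≤ ‖Jmap q ξ‖ ^ 2 := by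
    have hre : ∀ z : ℂ, (((q:ℂ)/2)*(z + ((1-2/q:ℝ):ℂ)*conj z)).re = (p - 1)⁻¹ * z.re := by
      intro z
      have key : q / 2 * (1 + (1 - 2/q)) = (p - 1)⁻¹ := by
        subst hq; field_simp; ring
      have h2q : 2 * q / (q * q) = 2 / q := by field_simp
      simp [Complex.mul_re, Complex.add_re, Complex.add_im, Complex.mul_im, Complex.conj_re,
        Complex.conj_im, Complex.ofReal_re, Complex.ofReal_im, Complex.div_re, Complex.div_im,
        Complex.normSq_apply]
      rw [h2q]
      linear_combination z.re * key
    have him : ∀ z : ℂ, (((q:ℂ)/2)*(z + ((1-2/q:ℝ):ℂ)*conj z)).im = z.im := by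
      intro z
      have key : q / 2 * (1 - (1 - 2/q)) = 1 := by field_simp; ring
      have h2q : 2 * q / (q * q) = 2 / q := by field_simp
      simp [Complex.mul_re, Complex.add_re, Complex.add_im, Complex.mul_im, Complex.conj_re,
        Complex.conj_im, Complex.ofReal_re, Complex.ofReal_im, Complex.div_re, Complex.div_im,
        Complex.normSq_apply]
      rw [h2q]
      linear_combination z.im * key
    rw [PiLp.norm_sq_eq_of_L2, PiLp.norm_sq_eq_of_L2, Finset.mul_sum]
    apply Finset.sum_le_sum
    intro i _
    have hni : ∀ z : ℂ, ‖z‖ ^ 2 = z.re ^ 2 + z.im ^ 2 := by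
      intro z
      rw [← Complex.normSq_eq_norm_sq, Complex.normSq_apply]; ring
    have hJi : (Jmap q ξ) i = ((q:ℂ)/2)*(ξ i + ((1-2/q:ℝ):ℂ)*conj (ξ i)) := rfl
    rw [hni, hni, hJi, hre, him]
    have h1 : m * (ξ i).re ^ 2 ≤ ((p-1)⁻¹ * (ξ i).re) ^ 2 := by
      rw [mul_pow]
      exact mul_le_mul_of_nonneg_right hm2 (sq_nonneg _)
    have h2 : m * (ξ i).im ^ 2 ≤ (ξ i).im ^ 2 := by
      nlinarith [sq_nonneg (ξ i).im]
    nlinarith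
  -- final chain
  have hchain := hΓ (Jmap q ξ)
  have hmV : m * V ≤ V := by nlinarith
  calc μ * m * (‖ξ‖ ^ 2 + V) = μ * (m * ‖ξ‖ ^ 2 + m * V) := by ring
    _ ≤ μ * (‖Jmap q ξ‖ ^ 2 + V) := by
        apply mul_le_mul_of_nonneg_left (add_le_add hnorm hmV) (le_of_lt hμ)
    _ ≤ Gamma p A b c V (Jmap q ξ) := hchain
    _ = Gamma q A.conjTranspose c b V ξ := hGam.symm
end
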